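/- arXiv:1803.02932 — 5 statements merged into one kernel-verified Lean document; each statement's English description precedes it below -/
import Mathlib

section
/- Every w-semi-greedy basis of a real Banach space is w-superdemocratic: there is a constant D̄ such that w(A) ≤ w(B) implies max_± ||Σ_{n∈A} ± e_n|| ≤ D̄ min_± ||Σ_{n∈B} ± e_n||. -/
open Finset Filter

section Defs

variable {X : Type*} [NormedAddCommGroup X] [NormedSpace ℝ X]

/-- `wsum w A` is the `w`-measure of the finite set `A`. -/
def wsum (w : ℕ → ℝ) (A : Finset ℕ) : ℝ := ∑ i ∈ A, w i

/-- `e` is a normalized (Schauder) basis with biorthogonal functionals `E`. -/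
def NormalizedBasis (e : ℕ → X) (E : ℕ → X →L[ℝ] ℝ) : Prop :=
  (∀ n, ‖e n‖ = 1) ∧ (∀ n m, E n (e m) = if n = m then (1:ℝ) else 0) ∧
  ∀ x : X, Filter.Tendsto (fun N => ∑ n ∈ Finset.range N, E n x • e n)
    Filter.atTop (nhds x)

/-- `Λ` is a greedy set for `x`: every coefficient inside dominates every one outside. -/
def GreedySet (E : ℕ → X →L[ℝ] ℝ) (x : X) (Λ : Finset ℕ) : Prop :=
  ∀ n ∈ Λ, ∀ k, k ∉ Λ → |E k x| ≤ |E n x|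

/-- quasi-greedy with constant `K`. -/
def QuasiGreedy (e : ℕ → X) (E : ℕ → X →L[ℝ] ℝ) (K : ℝ) : Prop :=
  ∀ (x : X) (Λ : Finset ℕ), GreedySet E x Λ → ‖∑ n ∈ Λ, E n x • e n‖ ≤ K * ‖x‖

/-- `w`-almost greedy with constant `K`. -/
def WAlmostGreedy (w : ℕ → ℝ) (e : ℕ → X) (E : ℕ → X →L[ℝ] ℝ) (K : ℝ) : Prop :=
  ∀ (x : X) (Λ : Finset ℕ), GreedySet E x Λ →
    ∀ A : Finset ℕ, wsum w A ≤ wsum w Λ →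
      ‖x - ∑ n ∈ Λ, E n x • e n‖ ≤ K * ‖x - ∑ n ∈ A, E n x • e n‖

/-- `w`-democratic with constant `D`. -/
def WDemocratic (w : ℕ → ℝ) (e : ℕ → X) (D : ℝ) : Prop :=
  ∀ A B : Finset ℕ, wsum w A ≤ wsum w B →
    ‖∑ n ∈ A, e n‖ ≤ D * ‖∑ n ∈ B, e n‖

/-- best `m`-term (weighted) approximation error. -/
noncomputable def sigmaW (w : ℕ → ℝ) (e : ℕ → X) (u : ℝ) (x : X) : ℝ :=
  sInf {r | ∃ (A : Finset ℕ) (c : ℕ → ℝ), wsum w A ≤ u ∧ r = ‖x - ∑ n ∈ A, c n • e n‖}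

/-- expansional best (weighted) approximation error. -/
noncomputable def sigmaTildeW (w : ℕ → ℝ) (e : ℕ → X) (E : ℕ → X →L[ℝ] ℝ)
    (u : ℝ) (x : X) : ℝ :=
  sInf {r | ∃ A : Finset ℕ, wsum w A ≤ u ∧ r = ‖x - ∑ n ∈ A, E n x • e n‖}

/-- weighted fundamental function `φ^w`. -/
noncomputable def phiW (w : ℕ → ℝ) (e : ℕ → X) (u : ℝ) : ℝ :=
  sSup {r | ∃ A : Finset ℕ, wsum w A ≤ u ∧ r = ‖∑ n ∈ A, e n‖}

/-- the companion function `φ̂^w`. -/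
noncomputable def phiHatW (w : ℕ → ℝ) (e : ℕ → X) (v : ℝ) : ℝ :=
  sInf {r | ∃ A : Finset ℕ, v < wsum w A ∧ r = ‖∑ n ∈ A, e n‖}

/-- `w`-semi-greedy with constant `K`: some Chebyshev approximant on each greedy set
realizes the bound. -/
def WSemiGreedy (w : ℕ → ℝ) (e : ℕ → X) (E : ℕ → X →L[ℝ] ℝ) (K : ℝ) : Prop :=
  ∀ (x : X) (Λ : Finset ℕ), GreedySet E x Λ →
    ∃ c : ℕ → ℝ, ‖x - ∑ n ∈ Λ, c n • e n‖ ≤ K * sigmaW w e (wsum w Λ) x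

/-- a sequence of signs. -/
def SignVec (ε : ℕ → ℝ) : Prop := ∀ n, ε n = 1 ∨ ε n = -1

/-- `w`-superdemocratic with constant `D`. -/
def WSuperDemocratic (w : ℕ → ℝ) (e : ℕ → X) (D : ℝ) : Prop :=
  ∀ A B : Finset ℕ, wsum w A ≤ wsum w B → ∀ ε δ : ℕ → ℝ, SignVec ε → SignVec δ →
    ‖∑ n ∈ A, ε n • e n‖ ≤ D * ‖∑ n ∈ B, δ n • e n‖

/-- `β` bounds the partial-sum projections (basis constant bound). -/
def BasisConstBound (e : ℕ → X) (E : ℕ → X →L[ℝ] ℝ) (β : ℝ) : Prop :=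
  ∀ (x : X) (N : ℕ), ‖∑ n ∈ Finset.range N, E n x • e n‖ ≤ β * ‖x‖

/-- equivalence to the unit vector basis of `c₀`. -/
def EquivC0 (e : ℕ → X) : Prop :=
  ∃ c C : ℝ, 0 < c ∧ ∀ (A : Finset ℕ) (a : ℕ → ℝ),
    (∀ n ∈ A, c * |a n| ≤ ‖∑ m ∈ A, a m • e m‖) ∧
    (∀ M : ℝ, (∀ n ∈ A, |a n| ≤ M) → ‖∑ n ∈ A, a n • e n‖ ≤ C * M)

/-- conservative with constant `C`. -/
def Conservative (e : ℕ → X) (C : ℝ) : Prop :=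
  ∀ A B : Finset ℕ, A.card ≤ B.card → (∀ a ∈ A, ∀ b ∈ B, a < b) →
    ‖∑ n ∈ A, e n‖ ≤ C * ‖∑ n ∈ B, e n‖

/-- `X` has finite cotype. -/
def FiniteCotype (X : Type*) [NormedAddCommGroup X] [NormedSpace ℝ X] : Prop :=
  ∃ (q C : ℝ), 2 ≤ q ∧ 0 < C ∧ ∀ (n : ℕ) (x : Fin n → X),
    (∑ j, ‖x j‖ ^ q) ^ (1/q) ≤
      C * ((∑ ε : Fin n → Bool,
        ‖∑ j, (if ε j then (1:ℝ) else -1) • x j‖ ^ q) / 2 ^ n) ^ (1/q)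

end Defs


section Aux

variable {X : Type*} [NormedAddCommGroup X] [NormedSpace ℝ X]

lemma wsum_nonneg' {w : ℕ → ℝ} (hw : ∀ i, 0 < w i) (A : Finset ℕ) : 0 ≤ wsum w A :=
  Finset.sum_nonneg fun i _ => (hw i).le

lemma coeff_sum' (e : ℕ → X) (E : ℕ → X →L[ℝ] ℝ)
    (hE : ∀ n m, E n (e m) = if n = m then (1:ℝ) else 0)
    (A : Finset ℕ) (a : ℕ → ℝ) (k : ℕ) :
    E k (∑ n ∈ A, a n • e n) = if k ∈ A then a k else 0 := by
  rw [map_sum]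
  have h : ∀ n ∈ A, E k (a n • e n) = if k = n then a n else 0 := by
    intro n _
    rw [map_smul, hE k n]
    by_cases h : k = n <;> simp [h]
  rw [Finset.sum_congr rfl h, Finset.sum_ite_eq]

lemma proj_sum' (e : ℕ → X) (E : ℕ → X →L[ℝ] ℝ)
    (hE : ∀ n m, E n (e m) = if n = m then (1:ℝ) else 0)
    (q : ℕ) (A : Finset ℕ) (a : ℕ → ℝ) :
    ∑ n ∈ Finset.range q, E n (∑ m ∈ A, a m • e m) • e n
      = ∑ m ∈ A.filter (· < q), a m • e m := by
  have h : ∀ n ∈ Finset.range q,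
      E n (∑ m ∈ A, a m • e m) • e n = if n ∈ A then a n • e n else 0 := by
    intro n _
    rw [coeff_sum' e E hE A a n]
    by_cases h : n ∈ A <;> simp [h]
  rw [Finset.sum_congr rfl h, ← Finset.sum_filter]
  apply Finset.sum_congr _ (fun _ _ => rfl)
  ext m
  simp only [Finset.mem_filter, Finset.mem_range]
  tauto

lemma sigmaW_le' (w : ℕ → ℝ) (e : ℕ → X) (u : ℝ) (x : X) (A : Finset ℕ) (c : ℕ → ℝ)
    (hA : wsum w A ≤ u) : sigmaW w e u x ≤ ‖x - ∑ n ∈ A, c n • e n‖ := by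
  apply csInf_le
  · refine ⟨0, ?_⟩
    rintro r ⟨A', c', -, hr⟩
    exact hr ▸ norm_nonneg _
  · exact ⟨A, c, hA, rfl⟩

lemma sigmaW_nonneg' (w : ℕ → ℝ) (e : ℕ → X) (u : ℝ) (x : X) : 0 ≤ sigmaW w e u x := by
  apply Real.sInf_nonneg
  rintro r ⟨A', c', -, hr⟩
  exact hr ▸ norm_nonneg _

lemma exists_beta [CompleteSpace X] (e : ℕ → X) (E : ℕ → X →L[ℝ] ℝ)
    (hb : NormalizedBasis e E) :
    ∃ β : ℝ, 1 ≤ β ∧ ∀ (x : X) (q : ℕ), ‖∑ n ∈ Finset.range q, E n x • e n‖ ≤ β * ‖x‖ := by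
  set g : ℕ → X →L[ℝ] X := fun q => ∑ n ∈ Finset.range q, (E n).smulRight (e n) with hg
  have hgapp : ∀ (q : ℕ) (x : X), g q x = ∑ n ∈ Finset.range q, E n x • e n := by
    intro q x
    simp [hg, ContinuousLinearMap.sum_apply]
  have hpt : ∀ x : X, ∃ C, ∀ q, ‖g q x‖ ≤ C := by
    intro x
    have ht : Filter.Tendsto (fun q => g q x) Filter.atTop (nhds x) := by
      simpa [hgapp] using hb.2.2 x
    obtain ⟨N, hN⟩ := (Metric.tendsto_atTop.1 ht) 1 one_pos
    refine ⟨(∑ n ∈ Finset.range N, ‖g n x‖) + (‖x‖ + 1), fun q => ?_⟩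
    have hsum_nonneg : (0:ℝ) ≤ ∑ n ∈ Finset.range N, ‖g n x‖ :=
      Finset.sum_nonneg fun _ _ => norm_nonneg _
    by_cases hq : q < N
    · have h1 : ‖g q x‖ ≤ ∑ n ∈ Finset.range N, ‖g n x‖ :=
        Finset.single_le_sum (fun n _ => norm_nonneg (g n x)) (Finset.mem_range.2 hq)
      have h2 : (0:ℝ) ≤ ‖x‖ + 1 := by positivity
      linarith
    · have h1 := hN q (le_of_not_gt hq)
      rw [dist_eq_norm] at h1
      have h2 : ‖g q x‖ ≤ ‖g q x - x‖ + ‖x‖ := by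
        have h3 := norm_add_le (g q x - x) x
        simpa using h3
      linarith
  obtain ⟨C', hC'⟩ := banach_steinhaus hpt
  refine ⟨max C' 1, le_max_right _ _, fun x q => ?_⟩
  calc ‖∑ n ∈ Finset.range q, E n x • e n‖ = ‖g q x‖ := by rw [hgapp]
    _ ≤ ‖g q‖ * ‖x‖ := (g q).le_opNorm x
    _ ≤ max C' 1 * ‖x‖ :=
        mul_le_mul_of_nonneg_right ((hC' q).trans (le_max_left _ _)) (norm_nonneg x)

lemma coeff_bound' (e : ℕ → X) (E : ℕ → X →L[ℝ] ℝ) {β : ℝ}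
    (he1 : ∀ n, ‖e n‖ = 1)
    (hβ : ∀ (x : X) (q : ℕ), ‖∑ n ∈ Finset.range q, E n x • e n‖ ≤ β * ‖x‖)
    (b : ℕ) (x : X) : |E b x| ≤ 2 * β * ‖x‖ := by
  have h1 : E b x • e b
      = (∑ n ∈ Finset.range (b+1), E n x • e n) - ∑ n ∈ Finset.range b, E n x • e n := by
    rw [Finset.sum_range_succ]; abel
  have h2 : |E b x| = ‖E b x • e b‖ := by
    rw [norm_smul, he1, mul_one, Real.norm_eq_abs]
  rw [h2, h1]
  calc ‖(∑ n ∈ Finset.range (b+1), E n x • e n) - ∑ n ∈ Finset.range b, E n x • e n‖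
      ≤ ‖∑ n ∈ Finset.range (b+1), E n x • e n‖ + ‖∑ n ∈ Finset.range b, E n x • e n‖ :=
        norm_sub_le _ _
    _ ≤ β * ‖x‖ + β * ‖x‖ := add_le_add (hβ x (b+1)) (hβ x b)
    _ = 2 * β * ‖x‖ := by ring

/-- Prefix extraction: a block on `L` (strictly left of `q`, coefficients of size `≤ 1`,
`L` lighter than `R`) is controlled by a unit-sign block on `R` (at/right of `q`). -/
lemma prefix_bound (w : ℕ → ℝ) (e : ℕ → X) (E : ℕ → X →L[ℝ] ℝ)
    (hb : NormalizedBasis e E) {K : ℝ} (hsg : WSemiGreedy w e E K)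
    {β : ℝ} (hβ0 : 0 ≤ β)
    (hβ : ∀ (x : X) (q : ℕ), ‖∑ n ∈ Finset.range q, E n x • e n‖ ≤ β * ‖x‖)
    (q : ℕ) (L R : Finset ℕ) (a b : ℕ → ℝ)
    (hLq : ∀ l ∈ L, l < q) (hqR : ∀ r ∈ R, q ≤ r)
    (ha : ∀ l ∈ L, |a l| ≤ 1) (hbs : ∀ r ∈ R, |b r| = 1)
    (hw' : wsum w L ≤ wsum w R) :
    ‖∑ n ∈ L, a n • e n‖ ≤ β * max K 0 * ‖∑ n ∈ R, b n • e n‖ := by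
  set x := (∑ n ∈ L, a n • e n) + ∑ n ∈ R, b n • e n with hx
  have hLR : ∀ n, n ∈ R → n ∉ L := fun n hn hl => absurd (hLq _ hl) (not_lt.2 (hqR _ hn))
  have hcoeff : ∀ k, E k x = (if k ∈ L then a k else 0) + (if k ∈ R then b k else 0) := by
    intro k
    rw [hx, map_add, coeff_sum' e E hb.2.1, coeff_sum' e E hb.2.1]
  have hgreedy : GreedySet E x R := by
    intro n hn k hk
    rw [hcoeff, hcoeff, if_neg (hLR n hn), if_pos hn, zero_add, if_neg hk, add_zero, hbs n hn]
    by_cases hkL : k ∈ L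
    · rw [if_pos hkL]; exact ha k hkL
    · rw [if_neg hkL]; simp
  obtain ⟨c, hc⟩ := hsg x R hgreedy
  have hxL : x - ∑ n ∈ L, a n • e n = ∑ n ∈ R, b n • e n := by rw [hx]; abel
  have hσle : sigmaW w e (wsum w R) x ≤ ‖∑ n ∈ R, b n • e n‖ := by
    have h := sigmaW_le' w e (wsum w R) x L a hw'
    rwa [hxL] at h
  have hσ0 : 0 ≤ sigmaW w e (wsum w R) x := sigmaW_nonneg' w e _ x
  have hy : ‖x - ∑ n ∈ R, c n • e n‖ ≤ max K 0 * ‖∑ n ∈ R, b n • e n‖ := by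
    have h1 : K * sigmaW w e (wsum w R) x ≤ max K 0 * sigmaW w e (wsum w R) x :=
      mul_le_mul_of_nonneg_right (le_max_left K 0) hσ0
    have h2 : max K 0 * sigmaW w e (wsum w R) x ≤ max K 0 * ‖∑ n ∈ R, b n • e n‖ :=
      mul_le_mul_of_nonneg_left hσle (le_max_right K 0)
    linarith [hc]
  have hproj : ∑ n ∈ Finset.range q, E n (x - ∑ m ∈ R, c m • e m) • e n
      = ∑ n ∈ L, a n • e n := by
    have hsub : ∀ n ∈ Finset.range q, E n (x - ∑ m ∈ R, c m • e m) • e n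
        = (E n (∑ m ∈ L, a m • e m) • e n + E n (∑ m ∈ R, b m • e m) • e n)
          - E n (∑ m ∈ R, c m • e m) • e n := by
      intro n _
      rw [hx, map_sub, map_add, sub_smul, add_smul]
    rw [Finset.sum_congr rfl hsub, Finset.sum_sub_distrib, Finset.sum_add_distrib]
    rw [proj_sum' e E hb.2.1, proj_sum' e E hb.2.1, proj_sum' e E hb.2.1]
    have hLf : L.filter (· < q) = L := Finset.filter_true_of_mem hLq
    have hRf : R.filter (· < q) = ∅ :=
      Finset.filter_false_of_mem (fun r hr => not_lt.2 (hqR r hr))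
    rw [hLf, hRf]
    simp
  calc ‖∑ n ∈ L, a n • e n‖
      = ‖∑ n ∈ Finset.range q, E n (x - ∑ m ∈ R, c m • e m) • e n‖ := by rw [hproj]
    _ ≤ β * ‖x - ∑ m ∈ R, c m • e m‖ := hβ _ q
    _ ≤ β * (max K 0 * ‖∑ n ∈ R, b n • e n‖) := mul_le_mul_of_nonneg_left hy hβ0
    _ = β * max K 0 * ‖∑ n ∈ R, b n • e n‖ := by ring

/-- Suffix extraction: a block on `R` (at/right of `q`, coefficients of size `≤ 1`,
`R` lighter than `L`) is controlled by a unit-sign block on `L` (strictly left of `q`). -/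
lemma suffix_bound (w : ℕ → ℝ) (e : ℕ → X) (E : ℕ → X →L[ℝ] ℝ)
    (hb : NormalizedBasis e E) {K : ℝ} (hsg : WSemiGreedy w e E K)
    {β : ℝ} (hβ0 : 0 ≤ β)
    (hβ : ∀ (x : X) (q : ℕ), ‖∑ n ∈ Finset.range q, E n x • e n‖ ≤ β * ‖x‖)
    (q : ℕ) (L R : Finset ℕ) (a b : ℕ → ℝ)
    (hLq : ∀ l ∈ L, l < q) (hqR : ∀ r ∈ R, q ≤ r)
    (ha : ∀ l ∈ L, |a l| = 1) (hbs : ∀ r ∈ R, |b r| ≤ 1)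
    (hw' : wsum w R ≤ wsum w L) :
    ‖∑ n ∈ R, b n • e n‖ ≤ (1 + β) * max K 0 * ‖∑ n ∈ L, a n • e n‖ := by
  set x := (∑ n ∈ L, a n • e n) + ∑ n ∈ R, b n • e n with hx
  have hRL : ∀ n, n ∈ L → n ∉ R := fun n hn hr => absurd (hLq _ hn) (not_lt.2 (hqR _ hr))
  have hcoeff : ∀ k, E k x = (if k ∈ L then a k else 0) + (if k ∈ R then b k else 0) := by
    intro k
    rw [hx, map_add, coeff_sum' e E hb.2.1, coeff_sum' e E hb.2.1]
  have hgreedy : GreedySet E x L := by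
    intro n hn k hk
    rw [hcoeff, hcoeff, if_pos hn, if_neg (hRL n hn), add_zero, if_neg hk, zero_add, ha n hn]
    by_cases hkR : k ∈ R
    · rw [if_pos hkR]; exact hbs k hkR
    · rw [if_neg hkR]; simp
  obtain ⟨c, hc⟩ := hsg x L hgreedy
  have hxR : x - ∑ n ∈ R, b n • e n = ∑ n ∈ L, a n • e n := by rw [hx]; abel
  have hσle : sigmaW w e (wsum w L) x ≤ ‖∑ n ∈ L, a n • e n‖ := by
    have h := sigmaW_le' w e (wsum w L) x R b hw'
    rwa [hxR] at h
  have hσ0 : 0 ≤ sigmaW w e (wsum w L) x := sigmaW_nonneg' w e _ x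
  have hy : ‖x - ∑ n ∈ L, c n • e n‖ ≤ max K 0 * ‖∑ n ∈ L, a n • e n‖ := by
    have h1 : K * sigmaW w e (wsum w L) x ≤ max K 0 * sigmaW w e (wsum w L) x :=
      mul_le_mul_of_nonneg_right (le_max_left K 0) hσ0
    have h2 : max K 0 * sigmaW w e (wsum w L) x ≤ max K 0 * ‖∑ n ∈ L, a n • e n‖ :=
      mul_le_mul_of_nonneg_left hσle (le_max_right K 0)
    linarith [hc]
  have hproj : ∑ n ∈ Finset.range q, E n (x - ∑ m ∈ L, c m • e m) • e n
      = (∑ n ∈ L, a n • e n) - ∑ n ∈ L, c n • e n := by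
    have hsub : ∀ n ∈ Finset.range q, E n (x - ∑ m ∈ L, c m • e m) • e n
        = (E n (∑ m ∈ L, a m • e m) • e n + E n (∑ m ∈ R, b m • e m) • e n)
          - E n (∑ m ∈ L, c m • e m) • e n := by
      intro n _
      rw [hx, map_sub, map_add, sub_smul, add_smul]
    rw [Finset.sum_congr rfl hsub, Finset.sum_sub_distrib, Finset.sum_add_distrib]
    rw [proj_sum' e E hb.2.1, proj_sum' e E hb.2.1, proj_sum' e E hb.2.1]
    have hLf : L.filter (· < q) = L := Finset.filter_true_of_mem hLq
    have hRf : R.filter (· < q) = ∅ :=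
      Finset.filter_false_of_mem (fun r hr => not_lt.2 (hqR r hr))
    rw [hLf, hRf]
    simp
  have hid : ∑ n ∈ R, b n • e n
      = (x - ∑ m ∈ L, c m • e m)
        - ∑ n ∈ Finset.range q, E n (x - ∑ m ∈ L, c m • e m) • e n := by
    rw [hproj, hx]; abel
  rw [hid]
  calc ‖(x - ∑ m ∈ L, c m • e m)
        - ∑ n ∈ Finset.range q, E n (x - ∑ m ∈ L, c m • e m) • e n‖
      ≤ ‖x - ∑ m ∈ L, c m • e m‖
        + ‖∑ n ∈ Finset.range q, E n (x - ∑ m ∈ L, c m • e m) • e n‖ := norm_sub_le _ _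
    _ ≤ ‖x - ∑ m ∈ L, c m • e m‖ + β * ‖x - ∑ m ∈ L, c m • e m‖ :=
        add_le_add le_rfl (hβ _ q)
    _ = (1 + β) * ‖x - ∑ m ∈ L, c m • e m‖ := by ring
    _ ≤ (1 + β) * (max K 0 * ‖∑ n ∈ L, a n • e n‖) :=
        mul_le_mul_of_nonneg_left hy (by linarith)
    _ = (1 + β) * max K 0 * ‖∑ n ∈ L, a n • e n‖ := by ring

end Aux

/-- every `w`-semi-greedy basis of a real Banach space is
`w`-superdemocratic. -/
theorem stmt12 {X : Type*} [NormedAddCommGroup X] [NormedSpace ℝ X] [CompleteSpace X]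
    (e : ℕ → X) (E : ℕ → X →L[ℝ] ℝ) (w : ℕ → ℝ)
    (hw : ∀ i, 0 < w i) (hb : NormalizedBasis e E)
    (h : ∃ K : ℝ, WSemiGreedy w e E K) :
    ∃ D : ℝ, WSuperDemocratic w e D := by
  classical
  obtain ⟨K, hsg⟩ := h
  obtain ⟨β, hβ1, hβ⟩ := exists_beta e E hb
  have hβ0 : (0:ℝ) ≤ β := by linarith
  have h1β : (0:ℝ) ≤ 1 + β := by linarith
  set K' := max K 0 with hK'
  have hK'0 : (0:ℝ) ≤ K' := le_max_right K 0
  refine ⟨β * K' * (1 + β) + 2 * β + (1 + β) * K' * β, ?_⟩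
  have hD0 : (0:ℝ) ≤ β * K' * (1 + β) + 2 * β + (1 + β) * K' * β := by
    have t1 : (0:ℝ) ≤ β * K' * (1 + β) := mul_nonneg (mul_nonneg hβ0 hK'0) h1β
    have t3 : (0:ℝ) ≤ (1 + β) * K' * β := mul_nonneg (mul_nonneg h1β hK'0) hβ0
    linarith
  intro A B hwAB ε δ hε hδ
  have habs_ε : ∀ n, |ε n| = 1 := by
    intro n; rcases hε n with hh | hh <;> rw [hh] <;> norm_num
  have habs_δ : ∀ n, |δ n| = 1 := by
    intro n; rcases hδ n with hh | hh <;> rw [hh] <;> norm_num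
  set s := ‖∑ n ∈ B, δ n • e n‖ with hs
  have hs0 : 0 ≤ s := norm_nonneg _
  rcases Finset.eq_empty_or_nonempty A with hA | hAne
  · rw [hA]
    simp only [Finset.sum_empty, norm_zero]
    exact mul_nonneg hD0 hs0
  have hwA : 0 < wsum w A := Finset.sum_pos (fun i _ => hw i) hAne
  have hBne : B.Nonempty := by
    rcases Finset.eq_empty_or_nonempty B with hB | hB
    · exfalso
      rw [hB] at hwAB
      simp only [wsum, Finset.sum_empty] at hwAB
      have : (0:ℝ) < wsum w A := hwA
      simp only [wsum] at this hwAB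
      linarith
    · exact hB
  have h1s : 1 ≤ 2 * β * s := by
    obtain ⟨b₀, hb₀⟩ := hBne
    have h1 : |E b₀ (∑ n ∈ B, δ n • e n)| = 1 := by
      rw [coeff_sum' e E hb.2.1 B δ b₀, if_pos hb₀]
      exact habs_δ b₀
    have h2 := coeff_bound' e E hb.1 hβ b₀ (∑ n ∈ B, δ n • e n)
    rw [h1] at h2
    exact h2
  -- norms of positional pieces of the B-block
  have hprojB : ∀ r : ℕ, ‖∑ n ∈ B.filter (· < r), δ n • e n‖ ≤ β * s := by
    intro r
    have h := hβ (∑ n ∈ B, δ n • e n) r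
    rwa [proj_sum' e E hb.2.1 r B δ] at h
  have hBtail : ∀ r : ℕ, ‖∑ n ∈ B.filter (fun m => ¬ m < r), δ n • e n‖ ≤ (1 + β) * s := by
    intro r
    have hsplit := Finset.sum_filter_add_sum_filter_not B (· < r) (fun n => δ n • e n)
    have heq : ∑ n ∈ B.filter (fun m => ¬ m < r), δ n • e n
        = (∑ n ∈ B, δ n • e n) - ∑ n ∈ B.filter (· < r), δ n • e n := by
      rw [← hsplit]; abel
    rw [heq]
    calc ‖(∑ n ∈ B, δ n • e n) - ∑ n ∈ B.filter (· < r), δ n • e n‖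
        ≤ ‖∑ n ∈ B, δ n • e n‖ + ‖∑ n ∈ B.filter (· < r), δ n • e n‖ := norm_sub_le _ _
      _ ≤ s + β * s := add_le_add le_rfl (hprojB r)
      _ = (1 + β) * s := by ring
  -- choice of the cut point q
  set M := A.sup id + 1 with hM
  set Qs := (Finset.range (M + 1)).filter
    (fun r => wsum w (A.filter (· < r)) ≤ wsum w (B.filter (fun m => ¬ m < r))) with hQs
  have hQne : Qs.Nonempty := by
    refine ⟨0, ?_⟩
    rw [hQs, Finset.mem_filter]
    refine ⟨Finset.mem_range.2 (Nat.succ_pos M), ?_⟩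
    have h0 : A.filter (· < 0) = ∅ :=
      Finset.filter_false_of_mem (fun m _ => Nat.not_lt_zero m)
    rw [h0]
    have : wsum w (∅ : Finset ℕ) = 0 := by simp [wsum]
    rw [this]
    exact wsum_nonneg' hw _
  set q := Qs.max' hQne with hq
  have hqmem : q ∈ Qs := Finset.max'_mem Qs hQne
  rw [hQs, Finset.mem_filter] at hqmem
  obtain ⟨hqrange, hPq⟩ := hqmem
  have hqM : q < M + 1 := Finset.mem_range.1 hqrange
  -- the three pieces of A
  have hsplitA : ∑ n ∈ A, ε n • e n
      = (∑ n ∈ A.filter (· < q), ε n • e n)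
        + ∑ n ∈ A.filter (fun m => ¬ m < q), ε n • e n :=
    (Finset.sum_filter_add_sum_filter_not A (· < q) _).symm
  have hsplitA2 : ∑ n ∈ A.filter (fun m => ¬ m < q), ε n • e n
      = (∑ n ∈ (A.filter (fun m => ¬ m < q)).filter (fun m => m = q), ε n • e n)
        + ∑ n ∈ (A.filter (fun m => ¬ m < q)).filter (fun m => ¬ m = q), ε n • e n :=
    (Finset.sum_filter_add_sum_filter_not _ (fun m => m = q) _).symm
  -- piece 1 : prefix of A
  have hbound1 : ‖∑ n ∈ A.filter (· < q), ε n • e n‖ ≤ β * K' * ((1 + β) * s) := by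
    have h := prefix_bound w e E hb hsg hβ0 hβ q (A.filter (· < q))
      (B.filter (fun m => ¬ m < q)) ε δ
      (fun l hl => (Finset.mem_filter.1 hl).2)
      (fun r hr => not_lt.1 (Finset.mem_filter.1 hr).2)
      (fun l _ => (habs_ε l).le)
      (fun r _ => habs_δ r)
      hPq
    calc ‖∑ n ∈ A.filter (· < q), ε n • e n‖
        ≤ β * K' * ‖∑ n ∈ B.filter (fun m => ¬ m < q), δ n • e n‖ := h
      _ ≤ β * K' * ((1 + β) * s) :=
          mul_le_mul_of_nonneg_left (hBtail q) (mul_nonneg hβ0 hK'0)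
  -- piece 2 : the single coordinate q
  have hbound2 : ‖∑ n ∈ (A.filter (fun m => ¬ m < q)).filter (fun m => m = q),
      ε n • e n‖ ≤ 2 * β * s := by
    have h1 : ‖∑ n ∈ (A.filter (fun m => ¬ m < q)).filter (fun m => m = q),
        ε n • e n‖ ≤ 1 := by
      by_cases hqA : q ∈ A.filter (fun m => ¬ m < q)
      · have heq : (A.filter (fun m => ¬ m < q)).filter (fun m => m = q) = {q} := by
          ext m
          simp only [Finset.mem_filter, Finset.mem_singleton]
          constructor
          · rintro ⟨-, h⟩; exact h
          · rintro rfl; exact ⟨Finset.mem_filter.1 hqA, rfl⟩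
        rw [heq, Finset.sum_singleton, norm_smul, hb.1, mul_one, Real.norm_eq_abs,
          habs_ε q]
      · have heq : (A.filter (fun m => ¬ m < q)).filter (fun m => m = q) = ∅ := by
          ext m
          simp only [Finset.mem_filter, Finset.notMem_empty, iff_false, not_and]
          rintro h1 rfl
          exact hqA (Finset.mem_filter.2 h1)
        rw [heq]
        simp
    linarith
  -- piece 3 : suffix of A beyond q
  have hbound3 : ‖∑ n ∈ (A.filter (fun m => ¬ m < q)).filter (fun m => ¬ m = q),
      ε n • e n‖ ≤ (1 + β) * K' * (β * s) := by
    have hA3eq : (A.filter (fun m => ¬ m < q)).filter (fun m => ¬ m = q)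
        = A.filter (fun m => ¬ m < q + 1) := by
      ext m
      simp only [Finset.mem_filter]
      constructor
      · rintro ⟨⟨h1, h2⟩, h3⟩; exact ⟨h1, by omega⟩
      · rintro ⟨h1, h2⟩; exact ⟨⟨h1, by omega⟩, by omega⟩
    rw [hA3eq]
    by_cases hqlt : q < M
    · have hq1mem : q + 1 ∈ Finset.range (M + 1) := Finset.mem_range.2 (by omega)
      have hnot : ¬ (wsum w (A.filter (· < q + 1))
          ≤ wsum w (B.filter (fun m => ¬ m < q + 1))) := by
        intro hcontra
        have hmem : q + 1 ∈ Qs := by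
          rw [hQs, Finset.mem_filter]
          exact ⟨hq1mem, hcontra⟩
        have := Finset.le_max' Qs (q + 1) hmem
        rw [← hq] at this
        omega
      rw [not_le] at hnot
      have hsplitwA : wsum w (A.filter (· < q + 1))
          + wsum w (A.filter (fun m => ¬ m < q + 1)) = wsum w A :=
        Finset.sum_filter_add_sum_filter_not A (· < q + 1) w
      have hsplitwB : wsum w (B.filter (· < q + 1))
          + wsum w (B.filter (fun m => ¬ m < q + 1)) = wsum w B :=
        Finset.sum_filter_add_sum_filter_not B (· < q + 1) w
      have hw3 : wsum w (A.filter (fun m => ¬ m < q + 1))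
          ≤ wsum w (B.filter (· < q + 1)) := by linarith
      have h := suffix_bound w e E hb hsg hβ0 hβ (q + 1) (B.filter (· < q + 1))
        (A.filter (fun m => ¬ m < q + 1)) δ ε
        (fun l hl => (Finset.mem_filter.1 hl).2)
        (fun r hr => not_lt.1 (Finset.mem_filter.1 hr).2)
        (fun l _ => habs_δ l)
        (fun r _ => (habs_ε r).le)
        hw3
      calc ‖∑ n ∈ A.filter (fun m => ¬ m < q + 1), ε n • e n‖
          ≤ (1 + β) * K' * ‖∑ n ∈ B.filter (· < q + 1), δ n • e n‖ := h
        _ ≤ (1 + β) * K' * (β * s) :=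
            mul_le_mul_of_nonneg_left (hprojB (q + 1)) (mul_nonneg h1β hK'0)
    · have hqeq : A.filter (fun m => ¬ m < q + 1) = ∅ := by
        ext m
        simp only [Finset.mem_filter, Finset.notMem_empty, iff_false, not_and]
        intro hmA
        have hle : m ≤ A.sup id := Finset.le_sup (f := id) hmA
        rw [hM] at hqlt
        omega
      rw [hqeq]
      simp only [Finset.sum_empty, norm_zero]
      exact mul_nonneg (mul_nonneg h1β hK'0) (mul_nonneg hβ0 hs0)
  -- combine
  rw [hsplitA, hsplitA2]
  calc ‖(∑ n ∈ A.filter (· < q), ε n • e n)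
        + ((∑ n ∈ (A.filter (fun m => ¬ m < q)).filter (fun m => m = q), ε n • e n)
          + ∑ n ∈ (A.filter (fun m => ¬ m < q)).filter (fun m => ¬ m = q), ε n • e n)‖
      ≤ ‖∑ n ∈ A.filter (· < q), ε n • e n‖
        + ‖(∑ n ∈ (A.filter (fun m => ¬ m < q)).filter (fun m => m = q), ε n • e n)
          + ∑ n ∈ (A.filter (fun m => ¬ m < q)).filter (fun m => ¬ m = q), ε n • e n‖ :=
        norm_add_le _ _
    _ ≤ ‖∑ n ∈ A.filter (· < q), ε n • e n‖
        + (‖∑ n ∈ (A.filter (fun m => ¬ m < q)).filter (fun m => m = q), ε n • e n‖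
          + ‖∑ n ∈ (A.filter (fun m => ¬ m < q)).filter (fun m => ¬ m = q), ε n • e n‖) :=
        add_le_add le_rfl (norm_add_le _ _)
    _ ≤ β * K' * ((1 + β) * s) + (2 * β * s + (1 + β) * K' * (β * s)) := by
        exact add_le_add hbound1 (add_le_add hbound2 hbound3)
    _ = (β * K' * (1 + β) + 2 * β + (1 + β) * K' * β) * s := by ring
end

section
/- Suppose 0 < inf_n w_n ≤ sup_n w_n < ∞. Then a basis (e_n) is w-superdemocratic if and only if it is superdemocratic (for the constant weight). -/
open Finset Filter

-- auxiliary lemmas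
lemma aux_sign_abs {ε : ℕ → ℝ} (hε : ∀ n, ε n = 1 ∨ ε n = -1) (n : ℕ) : |ε n| = 1 := by
  rcases hε n with h | h <;> simp [h]

lemma aux_chunk {X : Type*} [NormedAddCommGroup X] (f : ℕ → X) (m : ℕ) (hm : 0 < m) (M : ℝ) :
    ∀ A : Finset ℕ, (∀ S ⊆ A, S.card ≤ m → ‖∑ n ∈ S, f n‖ ≤ M) →
      ‖∑ n ∈ A, f n‖ ≤ ((A.card / m + 1 : ℕ) : ℝ) * M := by
  intro A
  induction A using Finset.strongInduction with
  | _ A ih =>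
    intro h
    have hM0 : 0 ≤ M := by simpa using h ∅ (by simp) (by simp)
    by_cases hA : A.card ≤ m
    · have h1 := h A (subset_refl A) hA
      have : (1 : ℝ) ≤ ((A.card / m + 1 : ℕ) : ℝ) := by exact_mod_cast Nat.le_add_left 1 _
      nlinarith [norm_nonneg (∑ n ∈ A, f n)]
    · push_neg at hA
      obtain ⟨S, hS, hScard⟩ := Finset.exists_subset_card_eq hA.le
      have hSne : S.Nonempty := Finset.card_pos.mp (by omega)
      have hsub : A \ S ⊂ A := Finset.sdiff_ssubset hS hSne
      have ih' := ih (A \ S) hsub (fun T hT hTc => h T (hT.trans Finset.sdiff_subset) hTc)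
      have hsplit : ∑ n ∈ A, f n = ∑ n ∈ S, f n + ∑ n ∈ A \ S, f n := by
        rw [← Finset.sum_sdiff hS]; exact (add_comm _ _)
      have hcard : (A \ S).card = A.card - m := by rw [Finset.card_sdiff_of_subset hS, hScard]
      have hdiv : A.card / m = (A.card - m) / m + 1 := Nat.div_eq_sub_div hm hA.le
      have hs := h S hS hScard.le
      calc ‖∑ n ∈ A, f n‖ ≤ ‖∑ n ∈ S, f n‖ + ‖∑ n ∈ A \ S, f n‖ := by
            rw [hsplit]; exact norm_add_le _ _
        _ ≤ M + (((A \ S).card / m + 1 : ℕ) : ℝ) * M := add_le_add hs ih'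
        _ = ((A.card / m + 1 : ℕ) : ℝ) * M := by
            rw [hcard, hdiv]; push_cast; ring

lemma aux_norm_sign_sum_le {X : Type*} [NormedAddCommGroup X] [NormedSpace ℝ X]
    (e : ℕ → X) (he : ∀ n, ‖e n‖ = 1) {ε : ℕ → ℝ} (hε : ∀ n, ε n = 1 ∨ ε n = -1)
    (A : Finset ℕ) : ‖∑ n ∈ A, ε n • e n‖ ≤ (A.card : ℝ) := by
  calc ‖∑ n ∈ A, ε n • e n‖ ≤ ∑ n ∈ A, ‖ε n • e n‖ := norm_sum_le _ _
    _ = ∑ n ∈ A, (1 : ℝ) := by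
        refine Finset.sum_congr rfl (fun n _ => ?_)
        rw [norm_smul, he n, Real.norm_eq_abs, aux_sign_abs hε, mul_one]
    _ = (A.card : ℝ) := by simp

lemma aux_wsum_le {w : ℕ → ℝ} {C : ℝ} (hC : ∀ n, w n ≤ C) (A : Finset ℕ) :
    wsum w A ≤ C * A.card := by
  unfold wsum
  calc ∑ i ∈ A, w i ≤ ∑ _i ∈ A, C := Finset.sum_le_sum (fun i _ => hC i)
    _ = C * A.card := by simp [mul_comm]

lemma aux_le_wsum {w : ℕ → ℝ} {c : ℝ} (hc : ∀ n, c ≤ w n) (A : Finset ℕ) :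
    c * A.card ≤ wsum w A := by
  unfold wsum
  calc c * A.card = ∑ _i ∈ A, c := by simp [mul_comm]
    _ ≤ ∑ i ∈ A, w i := Finset.sum_le_sum (fun i _ => hc i)

lemma aux_wsum_one (A : Finset ℕ) : wsum (fun _ => (1:ℝ)) A = A.card := by simp [wsum]

/-- if `0 < inf wₙ ≤ sup wₙ < ∞`, then `w`-superdemocratic is equivalent
to superdemocratic (the constant weight). -/
theorem stmt13 {X : Type*} [NormedAddCommGroup X] [NormedSpace ℝ X] [CompleteSpace X]
    (e : ℕ → X) (E : ℕ → X →L[ℝ] ℝ) (w : ℕ → ℝ)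
    (hb : NormalizedBasis e E)
    (hlb : ∃ c : ℝ, 0 < c ∧ ∀ n, c ≤ w n) (hub : ∃ C : ℝ, ∀ n, w n ≤ C) :
    (∃ D : ℝ, WSuperDemocratic w e D) ↔
      (∃ C : ℝ, WSuperDemocratic (fun _ => (1:ℝ)) e C) := by
  obtain ⟨c, hc0, hcw⟩ := hlb
  obtain ⟨Cw, hCw⟩ := hub
  have hCw0 : 0 < Cw := lt_of_lt_of_le hc0 ((hcw 0).trans (hCw 0))
  have he1 : ∀ n, ‖e n‖ = 1 := hb.1
  have hone : SignVec (fun _ => (1:ℝ)) := fun _ => Or.inl rfl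
  have hsingle : ∀ (ε : ℕ → ℝ), SignVec ε → ∀ k, ‖∑ n ∈ ({k} : Finset ℕ), ε n • e n‖ = 1 := by
    intro ε hε k
    rw [Finset.sum_singleton, norm_smul, he1 k, Real.norm_eq_abs, aux_sign_abs hε, mul_one]
  constructor
  · rintro ⟨D, hD⟩
    have hD1 : (1:ℝ) ≤ D := by
      have := hD {0} {0} le_rfl (fun _ => 1) (fun _ => 1) hone hone
      rw [hsingle _ hone 0] at this; linarith
    refine ⟨(2 * Cw / c + 1) * D, ?_⟩
    intro A B hAB ε δ hε hδ
    rw [aux_wsum_one, aux_wsum_one] at hAB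
    set SB := ‖∑ n ∈ B, δ n • e n‖ with hSB
    have hSB0 : 0 ≤ SB := norm_nonneg _
    rcases Finset.eq_empty_or_nonempty A with rfl | hAne
    · simp only [Finset.sum_empty, norm_zero]
      positivity
    · have hBne : B.Nonempty := by
        rcases Finset.eq_empty_or_nonempty B with hB | hB
        · exfalso; rw [hB] at hAB; simp at hAB; exact hAne.ne_empty hAB
        · exact hB
      -- lower bound : 1 ≤ D * SB
      obtain ⟨b, hbB⟩ := hBne
      have hwb : wsum w {b} ≤ wsum w B := by
        unfold wsum
        rw [Finset.sum_singleton]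
        exact Finset.single_le_sum (fun i _ => le_trans hc0.le (hcw i)) hbB
      have hlow : (1:ℝ) ≤ D * SB := by
        have := hD {b} B hwb (fun _ => 1) δ hone hδ
        rwa [hsingle _ hone b] at this
      have hBcard : c * (B.card : ℝ) ≤ wsum w B := aux_le_wsum hcw B
      set m : ℕ := ⌊wsum w B / Cw⌋₊ with hm
      by_cases hm0 : m = 0
      · -- wsum w B < Cw, so B.card < Cw / c
        have hwBlt : wsum w B < Cw := by
          by_contra hcon
          push_neg at hcon
          have : 1 ≤ m := Nat.le_floor (by rw [Nat.cast_one, le_div_iff₀ hCw0, one_mul]; exact hcon)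
          omega
        have hBsmall : (B.card : ℝ) ≤ Cw / c := by
          rw [le_div_iff₀ hc0]
          nlinarith
        have hAle : ‖∑ n ∈ A, ε n • e n‖ ≤ (A.card : ℝ) := aux_norm_sign_sum_le e he1 hε A
        have hAB' : (A.card : ℝ) ≤ (B.card : ℝ) := hAB
        calc ‖∑ n ∈ A, ε n • e n‖ ≤ (A.card : ℝ) := hAle
          _ = (A.card : ℝ) * 1 := (mul_one _).symm
          _ ≤ (Cw / c) * (D * SB) := by
              apply mul_le_mul (hAB'.trans hBsmall) hlow zero_le_one
              positivity
          _ ≤ (2 * Cw / c + 1) * D * SB := by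
              have h1 : Cw / c ≤ 2 * Cw / c + 1 := by
                have : 0 < Cw / c := by positivity
                have h2 : Cw / c ≤ 2 * Cw / c := by
                  rw [div_le_div_iff₀ hc0 hc0]; nlinarith
                linarith
              have : 0 ≤ D * SB := by nlinarith
              nlinarith
      · have hm1 : 1 ≤ m := Nat.one_le_iff_ne_zero.mpr hm0
        have hmpos : 0 < m := hm1
        have hchunk := aux_chunk (fun n => ε n • e n) m hmpos (D * SB) A ?_
        · -- bound the factor
          have hfac : ((A.card / m + 1 : ℕ) : ℝ) ≤ 2 * Cw / c + 1 := by
            have h1 : ((A.card / m : ℕ) : ℝ) ≤ (A.card : ℝ) / m := Nat.cast_div_le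
            have hm0' : (0:ℝ) < (m:ℝ) := by exact_mod_cast hmpos
            have hwlt : wsum w B < Cw * (m + 1) := by
              have := Nat.lt_floor_add_one (wsum w B / Cw)
              rw [← hm] at this
              calc wsum w B = Cw * (wsum w B / Cw) := by field_simp
                _ < Cw * (m + 1) := by
                    apply mul_lt_mul_of_pos_left _ hCw0
                    exact_mod_cast this
            have hB2 : (B.card : ℝ) ≤ 2 * Cw * m / c := by
              rw [le_div_iff₀ hc0]
              have hm1' : (1:ℝ) ≤ (m:ℝ) := by exact_mod_cast hm1
              nlinarith
            have : (A.card : ℝ) / m ≤ 2 * Cw / c := by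
              rw [div_le_div_iff₀ hm0' hc0] at *
              have : (A.card : ℝ) ≤ 2 * Cw * m / c := hAB.trans hB2
              rw [le_div_iff₀ hc0] at this
              nlinarith
            push_cast
            linarith [h1.trans this]
          have h0 : 0 ≤ D * SB := by nlinarith
          calc ‖∑ n ∈ A, ε n • e n‖ ≤ ((A.card / m + 1 : ℕ) : ℝ) * (D * SB) := hchunk
            _ ≤ (2 * Cw / c + 1) * (D * SB) := by
                apply mul_le_mul_of_nonneg_right hfac h0
            _ = (2 * Cw / c + 1) * D * SB := by ring
        · -- chunk hypothesis
          intro S hSA hScard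
          have hwS : wsum w S ≤ wsum w B := by
            have h1 : wsum w S ≤ Cw * S.card := aux_wsum_le hCw S
            have h2 : (Cw : ℝ) * S.card ≤ Cw * m := by
              apply mul_le_mul_of_nonneg_left _ hCw0.le
              exact_mod_cast hScard
            have h3 : Cw * (m:ℝ) ≤ wsum w B := by
              have hfl : ((m:ℕ):ℝ) ≤ wsum w B / Cw := by
                rw [hm]; exact Nat.floor_le (div_nonneg (le_trans (by positivity) hBcard) hCw0.le)
              calc Cw * (m:ℝ) ≤ Cw * (wsum w B / Cw) :=
                    mul_le_mul_of_nonneg_left hfl hCw0.le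
                _ = wsum w B := by field_simp
            linarith
          exact hD S B hwS ε δ hε hδ
  · rintro ⟨D, hD⟩
    have hD1 : (1:ℝ) ≤ D := by
      have := hD {0} {0} le_rfl (fun _ => 1) (fun _ => 1) hone hone
      rw [hsingle _ hone 0] at this; linarith
    refine ⟨(Cw / c + 1) * D, ?_⟩
    intro A B hAB ε δ hε hδ
    rcases Finset.eq_empty_or_nonempty B with rfl | hBne
    · have hA0 : A = ∅ := by
        have h1 : c * (A.card : ℝ) ≤ wsum w A := aux_le_wsum hcw A
        have h2 : wsum w (∅ : Finset ℕ) = 0 := by simp [wsum]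
        rw [h2] at hAB
        have : (A.card : ℝ) ≤ 0 := by nlinarith
        have : A.card = 0 := by exact_mod_cast le_antisymm this (Nat.cast_nonneg _)
        exact Finset.card_eq_zero.mp this
      subst hA0
      simp
    · have hBpos : 0 < B.card := Finset.card_pos.mpr hBne
      set SB := ‖∑ n ∈ B, δ n • e n‖ with hSB
      have hSB0 : 0 ≤ SB := norm_nonneg _
      have h0 : 0 ≤ D * SB := by nlinarith
      have hchunk := aux_chunk (fun n => ε n • e n) B.card hBpos (D * SB) A ?_
      · have hfac : ((A.card / B.card + 1 : ℕ) : ℝ) ≤ Cw / c + 1 := by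
          have h1 : ((A.card / B.card : ℕ) : ℝ) ≤ (A.card : ℝ) / B.card := Nat.cast_div_le
          have hB0' : (0:ℝ) < (B.card:ℝ) := by exact_mod_cast hBpos
          have hcA : c * (A.card : ℝ) ≤ Cw * B.card := by
            calc c * (A.card : ℝ) ≤ wsum w A := aux_le_wsum hcw A
              _ ≤ wsum w B := hAB
              _ ≤ Cw * B.card := aux_wsum_le hCw B
          have h2 : (A.card : ℝ) / B.card ≤ Cw / c := by
            rw [div_le_div_iff₀ hB0' hc0]; nlinarith
          push_cast
          linarith [h1.trans h2]
        calc ‖∑ n ∈ A, ε n • e n‖ ≤ ((A.card / B.card + 1 : ℕ) : ℝ) * (D * SB) := hchunk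
          _ ≤ (Cw / c + 1) * (D * SB) := mul_le_mul_of_nonneg_right hfac h0
          _ = (Cw / c + 1) * D * SB := by ring
      · intro S hSA hScard
        have : wsum (fun _ => (1:ℝ)) S ≤ wsum (fun _ => (1:ℝ)) B := by
          rw [aux_wsum_one, aux_wsum_one]; exact_mod_cast hScard
        exact hD S B this ε δ hε hδ
end

section
/- Suppose (e_n) is w-semi-greedy and 0 < inf w_n ≤ sup w_n < ∞. Then there exists M < ∞ such that for all finite A and scalars (a_n)_{n∈A}: (min_{n∈A} |a_n|) · ||Σ_{n∈A} e_n|| ≤ M ||Σ_{n∈A} a_n e_n||. -/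
open Finset Filter

lemma coeff_eq {X : Type*} [NormedAddCommGroup X] [NormedSpace ℝ X]
    (e : ℕ → X) (E : ℕ → X →L[ℝ] ℝ)
    (hbio : ∀ n m, E n (e m) = if n = m then (1:ℝ) else 0)
    (S : Finset ℕ) (b : ℕ → ℝ) (k : ℕ) :
    E k (∑ n ∈ S, b n • e n) = if k ∈ S then b k else 0 := by
  rw [map_sum]
  simp only [map_smul, hbio, smul_eq_mul, mul_ite, mul_one, mul_zero]
  simp [Finset.sum_ite_eq]

/-- if the basis is `w`-semi-greedy and `0 < inf wₙ ≤ sup wₙ < ∞`, then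
`(min_{n∈A}|aₙ|)·‖∑_{n∈A} eₙ‖ ≤ M ‖∑_{n∈A} aₙ eₙ‖` for some `M`. -/
theorem stmt15 {X : Type*} [NormedAddCommGroup X] [NormedSpace ℝ X] [CompleteSpace X]
    (e : ℕ → X) (E : ℕ → X →L[ℝ] ℝ) (w : ℕ → ℝ) (K : ℝ)
    (hb : NormalizedBasis e E) (h : WSemiGreedy w e E K)
    (hlb : ∃ c : ℝ, 0 < c ∧ ∀ n, c ≤ w n) (hub : ∃ C : ℝ, ∀ n, w n ≤ C) :
    ∃ M : ℝ, ∀ (A : Finset ℕ) (a : ℕ → ℝ) (c : ℝ), 0 ≤ c →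
      (∀ n ∈ A, c ≤ |a n|) →
      c * ‖∑ n ∈ A, e n‖ ≤ M * ‖∑ n ∈ A, a n • e n‖ := by
  obtain ⟨hnorm, hbio, htend⟩ := hb
  obtain ⟨cw, hcw0, hcw⟩ := hlb
  have hwnn : ∀ n, 0 ≤ w n := fun n => (le_of_lt hcw0).trans (hcw n)
  have hwsnn : ∀ S : Finset ℕ, 0 ≤ wsum w S := fun S =>
    Finset.sum_nonneg fun i _ => hwnn i
  -- partial sum projections
  set P : ℕ → X →L[ℝ] X := fun N => ∑ n ∈ Finset.range N, (E n).smulRight (e n)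
    with hPdef
  have hPapp : ∀ (N : ℕ) (x : X), P N x = ∑ n ∈ Finset.range N, E n x • e n := by
    intro N x
    simp [hPdef, ContinuousLinearMap.sum_apply, ContinuousLinearMap.smulRight_apply]
  obtain ⟨β, hβ⟩ : ∃ β, ∀ N, ‖P N‖ ≤ β := by
    apply banach_steinhaus
    intro x
    have h1 : Filter.Tendsto (fun N => ‖P N x‖) Filter.atTop (nhds ‖x‖) := by
      have := (htend x).norm
      simpa [hPapp] using this
    obtain ⟨C, hC⟩ := h1.bddAbove_range
    exact ⟨C, fun N => hC ⟨N, rfl⟩⟩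
  have hβ0 : 0 ≤ β := le_trans (norm_nonneg _) (hβ 0)
  have hPbound : ∀ (N : ℕ) (x : X), ‖P N x‖ ≤ β * ‖x‖ := fun N x =>
    le_trans ((P N).le_opNorm x) (mul_le_mul_of_nonneg_right (hβ N) (norm_nonneg x))
  have hE := coeff_eq e E hbio
  -- projection of finitely supported vectors
  have hProj : ∀ (S : Finset ℕ) (b : ℕ → ℝ) (M : ℕ),
      P M (∑ n ∈ S, b n • e n) = ∑ n ∈ S.filter (· < M), b n • e n := by
    intro S b M
    rw [hPapp]
    have : ∀ k ∈ Finset.range M, E k (∑ n ∈ S, b n • e n) • e k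
        = (if k ∈ S then b k • e k else 0) := by
      intro k _
      rw [hE S b k]
      split <;> simp
    rw [Finset.sum_congr rfl this, Finset.sum_ite_mem]
    congr 1
    ext n
    simp only [Finset.mem_inter, Finset.mem_range, Finset.mem_filter]
    tauto
  -- coefficient functional bound
  have hEb : ∀ (k : ℕ) (x : X), |E k x| ≤ 2 * β * ‖x‖ := by
    intro k x
    have h1 : E k x • e k = P (k+1) x - P k x := by
      rw [hPapp, hPapp, Finset.sum_range_succ]; abel
    have h2 : |E k x| = ‖E k x • e k‖ := by
      rw [norm_smul, hnorm k, Real.norm_eq_abs, mul_one]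
    rw [h2, h1]
    calc ‖P (k+1) x - P k x‖ ≤ ‖P (k+1) x‖ + ‖P k x‖ := norm_sub_le _ _
      _ ≤ β * ‖x‖ + β * ‖x‖ := add_le_add (hPbound _ x) (hPbound _ x)
      _ = 2 * β * ‖x‖ := by ring
  -- sigma is bounded below and ≤ any competitor
  have hσle : ∀ (u : ℝ) (x : X) (B : Finset ℕ) (cc : ℕ → ℝ), wsum w B ≤ u →
      sigmaW w e u x ≤ ‖x - ∑ n ∈ B, cc n • e n‖ := by
    intro u x B cc hB
    apply csInf_le
    · exact ⟨0, by rintro r ⟨A', c', _, rfl⟩; positivity⟩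
    · exact ⟨B, cc, hB, rfl⟩
  -- K ≥ 1
  have hK1 : 1 ≤ K := by
    obtain ⟨c', hc'⟩ := h (e 0) ∅ (by intro n hn; simp at hn)
    have hset : {r | ∃ (A : Finset ℕ) (c : ℕ → ℝ), wsum w A ≤ wsum w (∅ : Finset ℕ) ∧
        r = ‖e 0 - ∑ n ∈ A, c n • e n‖} = {1} := by
      ext r
      simp only [Set.mem_setOf_eq, Set.mem_singleton_iff]
      constructor
      · rintro ⟨A, cc, hA, rfl⟩
        have hA0 : A = ∅ := by
          by_contra hne
          obtain ⟨n, hn⟩ := Finset.nonempty_iff_ne_empty.mpr hne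
          have h1 : cw ≤ wsum w A :=
            le_trans (hcw n) (Finset.single_le_sum (fun i _ => hwnn i) hn)
          have h2 : wsum w (∅ : Finset ℕ) = 0 := by simp [wsum]
          rw [h2] at hA; linarith
        subst hA0; simp [hnorm 0]
      · rintro rfl
        exact ⟨∅, 0, le_refl _, by simp [hnorm 0]⟩
    rw [sigmaW, hset, csInf_singleton] at hc'
    simpa [hnorm 0] using hc'
  have hK0 : 0 ≤ K := le_trans zero_le_one hK1
  have hM0 : 0 ≤ β * K * (2 * β * K + 2 * β) := by
    apply mul_nonneg (mul_nonneg hβ0 hK0); nlinarith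
  refine ⟨β * K * (2 * β * K + 2 * β), ?_⟩
  intro A a c hc0 hc
  rcases A.eq_empty_or_nonempty with rfl | hA
  · simpa using mul_nonneg hM0 (norm_nonneg _)
  rcases eq_or_lt_of_le hc0 with rfl | hcpos
  · simpa using mul_nonneg hM0 (norm_nonneg _)
  -- setup
  set s : X := ∑ n ∈ A, a n • e n with hs
  set N : ℕ := A.max' hA + 1 with hN
  have hAN : ∀ n ∈ A, n < N := fun n hn => Nat.lt_succ_of_le (Finset.le_max' A n hn)
  have hwA0 : 0 ≤ wsum w A := hwsnn A
  have hex : ∃ m : ℕ, wsum w A < wsum w (Finset.Ico N (N + m + 1)) := by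
    obtain ⟨m, hm⟩ := exists_nat_gt (wsum w A / cw)
    refine ⟨m, ?_⟩
    have h1 : wsum w A < cw * m := by
      rw [div_lt_iff₀ hcw0] at hm; linarith [hm]
    have h2 : cw * ((m : ℝ) + 1) ≤ wsum w (Finset.Ico N (N + m + 1)) := by
      have : ∀ i ∈ Finset.Ico N (N + m + 1), cw ≤ w i := fun i _ => hcw i
      calc cw * ((m : ℝ) + 1) = (Finset.Ico N (N + m + 1)).card • cw := by
            rw [Nat.card_Ico, nsmul_eq_mul]
            have hcard : N + m + 1 - N = m + 1 := by omega
            rw [hcard]; push_cast; ring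
        _ ≤ ∑ i ∈ Finset.Ico N (N + m + 1), w i := Finset.card_nsmul_le_sum _ _ _ this
        _ = wsum w (Finset.Ico N (N + m + 1)) := rfl
    nlinarith
  set m₀ : ℕ := Nat.find hex with hm₀
  set D2 : Finset ℕ := Finset.Ico N (N + m₀) with hD2
  set D : Finset ℕ := Finset.Ico N (N + m₀ + 1) with hD
  have hDgt : wsum w A < wsum w D := Nat.find_spec hex
  have hD2le : wsum w D2 ≤ wsum w A := by
    rcases Nat.eq_zero_or_pos m₀ with h0 | hpos
    · rw [hD2, h0]; simpa [wsum] using hwA0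
    · have hlt : m₀ - 1 < m₀ := Nat.sub_lt hpos one_pos
      have := Nat.find_min hex hlt
      push_neg at this
      have heq : N + (m₀ - 1) + 1 = N + m₀ := by omega
      rwa [heq] at this
  have hdisj2 : Disjoint A D2 := by
    rw [Finset.disjoint_left]
    intro n hnA hnD2
    have h1 := (Finset.mem_Ico.mp hnD2).1
    have h2 := hAN n hnA
    omega
  have hdisjD : Disjoint A D := by
    rw [Finset.disjoint_left]
    intro n hnA hnD
    have h1 := (Finset.mem_Ico.mp hnD).1
    have h2 := hAN n hnA
    omega
  ----------------------------------------------------------------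
  -- STEP 1 : c * ‖∑_{D2} e‖ ≤ 2βK‖s‖
  ----------------------------------------------------------------
  set b1 : ℕ → ℝ := fun n => if n ∈ A then a n else c with hb1
  set x1 : X := ∑ n ∈ A ∪ D2, b1 n • e n with hx1def
  have hx1 : x1 = s + ∑ n ∈ D2, c • e n := by
    rw [hx1def, Finset.sum_union hdisj2, hs]
    congr 1
    · exact Finset.sum_congr rfl fun n hn => by simp [hb1, hn]
    · refine Finset.sum_congr rfl fun n hn => ?_
      have : n ∉ A := Finset.disjoint_right.mp hdisj2 hn
      simp [hb1, this]
  have hg1 : GreedySet E x1 A := by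
    intro n hn k hk
    have hEn : E n x1 = a n := by
      rw [hx1def, hE]
      simp [Finset.mem_union, hn, hb1]
    rw [hEn, hx1def, hE]
    split
    · next hmem =>
      have hkD2 : k ∈ D2 := (Finset.mem_union.mp hmem).resolve_left hk
      have : b1 k = c := by simp [hb1, hk]
      rw [this, abs_of_nonneg hc0]
      exact hc n hn
    · simpa using abs_nonneg (a n)
  obtain ⟨c1, hc1⟩ := h x1 A hg1
  have hσ1 : sigmaW w e (wsum w A) x1 ≤ ‖s‖ := by
    have := hσle (wsum w A) x1 D2 (fun _ => c) hD2le
    have heq : x1 - ∑ n ∈ D2, (fun _ => c) n • e n = s := by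
      rw [hx1]; simp
    rwa [heq] at this
  set z1 : X := ∑ n ∈ A, c1 n • e n with hz1
  have hstep1 : ‖x1 - z1‖ ≤ K * ‖s‖ :=
    le_trans hc1 (mul_le_mul_of_nonneg_left hσ1 hK0)
  -- segment projection extracts the D2 part
  have hPx1top : P (N + m₀) x1 = x1 := by
    rw [hx1def, hProj]
    congr 1
    apply Finset.filter_true_of_mem
    intro n hn
    rcases Finset.mem_union.mp hn with hn | hn
    · have := hAN n hn; omega
    · exact (Finset.mem_Ico.mp hn).2
  have hPx1bot : P N x1 = s := by
    rw [hx1def, hProj, hs]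
    have hfil : (A ∪ D2).filter (· < N) = A := by
      ext n
      simp only [Finset.mem_filter, Finset.mem_union, Finset.mem_Ico, hD2]
      constructor
      · rintro ⟨h1 | h1, h2⟩
        · exact h1
        · omega
      · intro hn
        exact ⟨Or.inl hn, hAN n hn⟩
    rw [hfil]
    exact Finset.sum_congr rfl fun n hn => by simp [hb1, hn]
  have hPz1 : ∀ M : ℕ, N ≤ M → P M z1 = z1 := by
    intro M hM
    rw [hz1, hProj]
    congr 1
    apply Finset.filter_true_of_mem
    intro n hn
    have := hAN n hn; omega
  have hQ : P (N + m₀) (x1 - z1) - P N (x1 - z1) = ∑ n ∈ D2, c • e n := by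
    rw [map_sub, map_sub, hPx1top, hPx1bot, hPz1 (N + m₀) (by omega),
      hPz1 N (le_refl N), hx1]
    abel
  have hstep1' : c * ‖∑ n ∈ D2, e n‖ ≤ 2 * β * (K * ‖s‖) := by
    have h1 : ‖∑ n ∈ D2, c • e n‖ = c * ‖∑ n ∈ D2, e n‖ := by
      rw [← Finset.smul_sum, norm_smul, Real.norm_eq_abs, abs_of_nonneg hc0]
    rw [← h1, ← hQ]
    calc ‖P (N + m₀) (x1 - z1) - P N (x1 - z1)‖
        ≤ ‖P (N + m₀) (x1 - z1)‖ + ‖P N (x1 - z1)‖ := norm_sub_le _ _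
      _ ≤ β * ‖x1 - z1‖ + β * ‖x1 - z1‖ := add_le_add (hPbound _ _) (hPbound _ _)
      _ = 2 * β * ‖x1 - z1‖ := by ring
      _ ≤ 2 * β * (K * ‖s‖) := by
          apply mul_le_mul_of_nonneg_left hstep1; linarith
  ----------------------------------------------------------------
  -- STEP 1b : c ≤ 2β‖s‖
  ----------------------------------------------------------------
  have hstep1b : c ≤ 2 * β * ‖s‖ := by
    obtain ⟨n₀, hn₀⟩ := hA
    have h1 : E n₀ s = a n₀ := by rw [hs, hE]; simp [hn₀]
    calc c ≤ |a n₀| := hc n₀ hn₀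
      _ = |E n₀ s| := by rw [h1]
      _ ≤ 2 * β * ‖s‖ := hEb n₀ s
  ----------------------------------------------------------------
  -- STEP 2 : ‖∑_A e‖ ≤ βK‖∑_D e‖
  ----------------------------------------------------------------
  set y : X := ∑ n ∈ A ∪ D, (1:ℝ) • e n with hydef
  have hg2 : GreedySet E y D := by
    intro n hn k hk
    have hEn : E n y = 1 := by
      rw [hydef, hE]; simp [Finset.mem_union, hn]
    rw [hEn, hydef, hE]
    split <;> simp
  obtain ⟨c2, hc2⟩ := h y D hg2
  have hσ2 : sigmaW w e (wsum w D) y ≤ ‖∑ n ∈ D, e n‖ := by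
    have := hσle (wsum w D) y A (fun _ => (1:ℝ)) (le_of_lt hDgt)
    have heq : y - ∑ n ∈ A, (fun _ => (1:ℝ)) n • e n = ∑ n ∈ D, e n := by
      rw [hydef, Finset.sum_union hdisjD]; simp
    rwa [heq] at this
  set z2 : X := ∑ n ∈ D, c2 n • e n with hz2
  have hstep2pre : ‖y - z2‖ ≤ K * ‖∑ n ∈ D, e n‖ :=
    le_trans hc2 (mul_le_mul_of_nonneg_left hσ2 hK0)
  have hPy : P N y = ∑ n ∈ A, e n := by
    rw [hydef, hProj]
    have hfil : (A ∪ D).filter (· < N) = A := by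
      ext n
      simp only [Finset.mem_filter, Finset.mem_union, Finset.mem_Ico, hD]
      constructor
      · rintro ⟨h1 | h1, h2⟩
        · exact h1
        · omega
      · intro hn
        exact ⟨Or.inl hn, hAN n hn⟩
    rw [hfil]; simp
  have hPz2 : P N z2 = 0 := by
    rw [hz2, hProj]
    have hfil : D.filter (· < N) = ∅ := by
      apply Finset.filter_eq_empty_iff.mpr
      intro n hn
      have := (Finset.mem_Ico.mp hn).1
      omega
    rw [hfil, Finset.sum_empty]
  have hstep2 : ‖∑ n ∈ A, e n‖ ≤ β * (K * ‖∑ n ∈ D, e n‖) := by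
    have h1 : P N (y - z2) = ∑ n ∈ A, e n := by
      rw [map_sub, hPy, hPz2, sub_zero]
    calc ‖∑ n ∈ A, e n‖ = ‖P N (y - z2)‖ := by rw [h1]
      _ ≤ β * ‖y - z2‖ := hPbound _ _
      _ ≤ β * (K * ‖∑ n ∈ D, e n‖) := mul_le_mul_of_nonneg_left hstep2pre hβ0
  ----------------------------------------------------------------
  -- combine
  ----------------------------------------------------------------
  have hsplit : ∑ n ∈ D, e n = ∑ n ∈ D2, e n + e (N + m₀) := by
    rw [hD, hD2]
    exact Finset.sum_Ico_succ_top (by omega) e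
  calc c * ‖∑ n ∈ A, e n‖
      ≤ c * (β * (K * ‖∑ n ∈ D, e n‖)) := mul_le_mul_of_nonneg_left hstep2 hc0
    _ = β * K * (c * ‖∑ n ∈ D, e n‖) := by ring
    _ ≤ β * K * (2 * β * (K * ‖s‖) + 2 * β * ‖s‖) := by
        apply mul_le_mul_of_nonneg_left ?_ (mul_nonneg hβ0 hK0)
        calc c * ‖∑ n ∈ D, e n‖
            ≤ c * (‖∑ n ∈ D2, e n‖ + ‖e (N + m₀)‖) := by
              apply mul_le_mul_of_nonneg_left ?_ hc0
              rw [hsplit]; exact norm_add_le _ _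
          _ = c * ‖∑ n ∈ D2, e n‖ + c := by rw [hnorm (N + m₀)]; ring
          _ ≤ 2 * β * (K * ‖s‖) + 2 * β * ‖s‖ := add_le_add hstep1' hstep1b
    _ = β * K * (2 * β * K + 2 * β) * ‖s‖ := by ring
end

section
/- Assume w ∈ c₀ is nonincreasing and (e_n) is a normalized D-w-democratic basis. Then for every m ∈ ℕ there exists N ∈ ℕ such that ||Σ_{n∈A} e_n|| ≤ D for every set A of cardinality m with N ≤ min A. If moreover w ∈ ℓ₁, there exists M ∈ ℕ such that ||Σ_{n∈A} e_n|| ≤ D for every finite A with M ≤ min A. -/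
open Finset Filter

/-- if `w ∈ c₀` is nonincreasing and the basis is `D`-`w`-democratic, then
for every `m` there is `N` with `‖∑_{n∈A} eₙ‖ ≤ D` whenever `|A| = m` and `N ≤ min A`;
if moreover `w ∈ ℓ₁`, an `M` works for all finite `A` with `M ≤ min A`. -/
theorem stmt17 {X : Type*} [NormedAddCommGroup X] [NormedSpace ℝ X] [CompleteSpace X]
    (e : ℕ → X) (E : ℕ → X →L[ℝ] ℝ) (w : ℕ → ℝ) (D : ℝ)
    (hw : ∀ i, 0 < w i) (hmono : Antitone w)
    (h0 : Filter.Tendsto w Filter.atTop (nhds 0))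
    (hb : NormalizedBasis e E) (hD : WDemocratic w e D) :
    (∀ m : ℕ, ∃ N : ℕ, ∀ A : Finset ℕ, A.card = m → (∀ n ∈ A, N ≤ n) →
        ‖∑ n ∈ A, e n‖ ≤ D) ∧
    (Summable w → ∃ M : ℕ, ∀ A : Finset ℕ, (∀ n ∈ A, M ≤ n) →
        ‖∑ n ∈ A, e n‖ ≤ D) := by
  -- key: if `wsum w A ≤ w 0`, democracy against `{0}` gives the bound
  have key : ∀ A : Finset ℕ, wsum w A ≤ w 0 → ‖∑ n ∈ A, e n‖ ≤ D := by
    intro A hA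
    have h := hD A {0} (by simpa [wsum] using hA)
    simpa [hb.1 0] using h
  constructor
  · intro m
    have hpos : (0:ℝ) < w 0 / (m + 1) := div_pos (hw 0) (by positivity)
    obtain ⟨N, hN⟩ := (h0.eventually_lt_const hpos).exists
    refine ⟨N, fun A hcard hmin => ?_⟩
    apply key
    have h1 : wsum w A ≤ ∑ _n ∈ A, w N := by
      exact Finset.sum_le_sum fun n hn => hmono (hmin n hn)
    have h2 : (∑ _n ∈ A, w N) = m * w N := by
      rw [Finset.sum_const, hcard, nsmul_eq_mul]
    have h3 : (m : ℝ) * w N ≤ w 0 := by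
      have : (m : ℝ) * w N ≤ (m + 1) * (w 0 / (m + 1)) := by
        apply mul_le_mul (by linarith [Nat.cast_nonneg (α := ℝ) m]) hN.le (hw N).le
        positivity
      rw [mul_div_cancel₀] at this
      · exact this
      · positivity
    linarith
  · intro hsum
    have htail : Filter.Tendsto (fun M => ∑' k, w (k + M)) Filter.atTop (nhds 0) :=
      _root_.tendsto_sum_nat_add w
    obtain ⟨M, hM⟩ := (htail.eventually_lt_const (hw 0)).exists
    refine ⟨M, fun A hmin => ?_⟩
    apply key
    have hsub : ∀ n ∈ A, n - M + M = n := fun n hn => Nat.sub_add_cancel (hmin n hn)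
    have hsumM : Summable (fun k => w (k + M)) := (summable_nat_add_iff M).mpr hsum
    have h1 : wsum w A = ∑ k ∈ A.image (· - M), w (k + M) := by
      rw [Finset.sum_image]
      · exact (Finset.sum_congr rfl fun n hn => by rw [hsub n hn]).symm
      · intro a ha b hb hab
        have := congrArg (· + M) hab
        simpa [hsub a ha, hsub b hb] using this
    rw [h1]
    calc (∑ k ∈ A.image (· - M), w (k + M)) ≤ ∑' k, w (k + M) :=
          Summable.sum_le_tsum _ (fun k _ => (hw _).le) hsumM
      _ ≤ w 0 := hM.le
end

section
/- If w ∈ c₀ and (e_n) is a normalized w-almost greedy basis of a real Banach space, then (e_n) is weakly null. -/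
open Finset Filter

section AuxLemmas

variable {X : Type*} [NormedAddCommGroup X] [NormedSpace ℝ X]

/-- Key bound: any block with weight at most `w k` (with `k` outside) has norm `≤ 2K`. -/
lemma key_bound (e : ℕ → X) (E : ℕ → X →L[ℝ] ℝ) (w : ℕ → ℝ)
    (hb : NormalizedBasis e E) {K : ℝ} (hK : WAlmostGreedy w e E K)
    (A : Finset ℕ) (k : ℕ) (hk : k ∉ A) (hA : wsum w A ≤ w k) :
    ‖∑ n ∈ A, e n‖ ≤ K * 2 := by
  obtain ⟨hnorm, hbi, -⟩ := hb
  set x : X := (∑ n ∈ A, e n) + (2:ℝ) • e k with hx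
  have hE : ∀ m, E m x = (if m ∈ A then (1:ℝ) else 0) + 2 * (if m = k then 1 else 0) := by
    intro m
    simp only [hx, map_add, map_sum, map_smul, smul_eq_mul, hbi]
    rw [Finset.sum_ite_eq A m (fun _ => (1:ℝ))]
  have hEk : E k x = 2 := by rw [hE]; simp [hk]
  have hEA : ∀ n ∈ A, E n x = 1 := by
    intro n hn
    have hne : n ≠ k := fun h => hk (h ▸ hn)
    rw [hE]; simp [hn, hne]
  have hg : GreedySet E x {k} := by
    intro n hn m hm
    rw [Finset.mem_singleton] at hn hm
    subst hn
    rw [hEk, hE m, if_neg hm]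
    split_ifs <;> norm_num
  have hle : wsum w A ≤ wsum w {k} := by
    simp only [wsum, Finset.sum_singleton]; exact hA
  have hineq := hK x {k} hg A hle
  have hL : x - ∑ n ∈ {k}, E n x • e n = ∑ n ∈ A, e n := by
    rw [Finset.sum_singleton, hEk, hx, add_sub_cancel_right]
  have hR : x - ∑ n ∈ A, E n x • e n = (2:ℝ) • e k := by
    rw [Finset.sum_congr rfl (fun n hn => by rw [hEA n hn, one_smul]), hx,
      add_sub_cancel_left]
  rw [hL, hR] at hineq
  calc ‖∑ n ∈ A, e n‖ ≤ K * ‖(2:ℝ) • e k‖ := hineq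
    _ = K * 2 := by rw [norm_smul, hnorm k]; norm_num

/-- One-sided contradiction lemma. -/
lemma no_freq (e : ℕ → X) (E : ℕ → X →L[ℝ] ℝ) (w : ℕ → ℝ)
    (hw : ∀ i, 0 < w i) (h0 : Filter.Tendsto w Filter.atTop (nhds 0))
    (hb : NormalizedBasis e E) {K : ℝ} (hK : WAlmostGreedy w e E K)
    (f : X →L[ℝ] ℝ) {ε : ℝ} (hε : 0 < ε)
    (hf : ∃ᶠ n in atTop, ε ≤ f (e n)) : False := by
  set N : ℕ := ⌈(‖f‖ * (K * 2)) / ε⌉₊ + 1 with hNdef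
  have hNpos : (0:ℝ) < (N : ℝ) := by positivity
  have hN : ‖f‖ * (K * 2) < (N : ℝ) * ε := by
    rw [← div_lt_iff₀ hε]
    calc (‖f‖ * (K * 2)) / ε ≤ (⌈(‖f‖ * (K * 2)) / ε⌉₊ : ℝ) := Nat.le_ceil _
      _ < (N : ℝ) := by rw [hNdef]; push_cast; linarith
  have hsmall : ∀ᶠ n in atTop, w n < w 0 / N :=
    h0.eventually_lt_const (div_pos (hw 0) hNpos)
  obtain ⟨φ, hmono, hφ⟩ := Filter.extraction_of_frequently_atTop (hf.and_eventually hsmall)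
  set ψ : ℕ → ℕ := fun i => φ (i + 1) with hψdef
  have hψ : StrictMono ψ := fun a b hab => hmono (by omega)
  set A : Finset ℕ := (Finset.range N).image ψ with hAdef
  have h0A : (0 : ℕ) ∉ A := by
    simp only [hAdef, Finset.mem_image]
    rintro ⟨i, -, hi⟩
    have : i + 1 ≤ ψ i := hmono.le_apply
    omega
  have hsumA : ∀ g : ℕ → ℝ, ∑ n ∈ A, g n = ∑ i ∈ Finset.range N, g (ψ i) := by
    intro g
    exact Finset.sum_image (fun a _ b _ h => hψ.injective h)
  have hwA : wsum w A ≤ w 0 := by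
    rw [wsum, hsumA]
    calc ∑ i ∈ Finset.range N, w (ψ i) ≤ ∑ _i ∈ Finset.range N, w 0 / N :=
          Finset.sum_le_sum (fun i _ => (hφ (i + 1)).2.le)
      _ = (N : ℝ) * (w 0 / N) := by
          rw [Finset.sum_const, Finset.card_range, nsmul_eq_mul]
      _ = w 0 := by field_simp
  have hnormA : ‖∑ n ∈ A, e n‖ ≤ K * 2 := key_bound e E w hb hK A 0 h0A hwA
  have hfsum : (N : ℝ) * ε ≤ f (∑ n ∈ A, e n) := by
    rw [map_sum, hsumA]
    calc (N : ℝ) * ε = ∑ _i ∈ Finset.range N, ε := by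
          rw [Finset.sum_const, Finset.card_range, nsmul_eq_mul]
      _ ≤ ∑ i ∈ Finset.range N, f (e (ψ i)) :=
          Finset.sum_le_sum (fun i _ => (hφ (i + 1)).1)
  have h1 : f (∑ n ∈ A, e n) ≤ ‖f‖ * (K * 2) :=
    calc f (∑ n ∈ A, e n) ≤ ‖f (∑ n ∈ A, e n)‖ := le_abs_self _
      _ ≤ ‖f‖ * ‖∑ n ∈ A, e n‖ := f.le_opNorm _
      _ ≤ ‖f‖ * (K * 2) := mul_le_mul_of_nonneg_left hnormA (norm_nonneg f)
  linarith

end AuxLemmas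

/-- if `w ∈ c₀`, every normalized `w`-almost greedy basis of a real
Banach space is weakly null. -/
theorem stmt19 {X : Type*} [NormedAddCommGroup X] [NormedSpace ℝ X] [CompleteSpace X]
    (e : ℕ → X) (E : ℕ → X →L[ℝ] ℝ) (w : ℕ → ℝ)
    (hw : ∀ i, 0 < w i) (h0 : Filter.Tendsto w Filter.atTop (nhds 0))
    (hb : NormalizedBasis e E) (h : ∃ K : ℝ, WAlmostGreedy w e E K) :
    ∀ f : X →L[ℝ] ℝ, Filter.Tendsto (fun n => f (e n)) Filter.atTop (nhds 0) := by
  obtain ⟨K, hK⟩ := h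
  intro f
  by_contra hcon
  rw [Metric.tendsto_atTop] at hcon
  push_neg at hcon
  obtain ⟨ε, hε, hfr⟩ := hcon
  have hfr' : ∃ᶠ n in atTop, ε ≤ |f (e n)| := by
    rw [Filter.frequently_atTop]
    intro N
    obtain ⟨n, hn, hd⟩ := hfr N
    exact ⟨n, hn, by simpa [Real.dist_eq] using hd⟩
  have hcases : (∃ᶠ n in atTop, ε ≤ f (e n)) ∨ (∃ᶠ n in atTop, ε ≤ -(f (e n))) := by
    rw [← Filter.frequently_or_distrib]
    exact hfr'.mono (fun n hn => le_abs.mp hn)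
  rcases hcases with h1 | h1
  · exact no_freq e E w hw h0 hb hK f hε h1
  · exact no_freq e E w hw h0 hb hK (-f) hε (by simpa using h1)
end
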